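/- Let x be an object of A and α : L x ⟶ L x an idempotent (α ≫ α = α); set α̃ := η_x ≫ R α : x ⟶ R(L x), and suppose R α = p ≫ α̃ for some p : R(L x) ⟶ x, with α̃ a monomorphism and p an epimorphism. Then: (i) α̃ ≫ p = 𝟙_x and η_x ≫ p = 𝟙_x; (ii) (x, p) is a T-algebra, i.e. μ_x ≫ p = R(L p) ≫ p; (iii) α̃ is a T-algebra homomorphism from (x, p) to the free T-algebra (R(L x), μ_x), i.e. p ≫ α̃ = R(L α̃) ≫ μ_x. Consequently the algebra (x, p) is a retract, in Alg(T), of the free algebra (R(L x), μ_x), split by the algebra homomorphisms α̃ and p. -/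

import Mathlib

open CategoryTheory

/-- STATEMENT 13: let `x : A`, let `α : L x ⟶ L x` be idempotent, set `α̃ := η_x ≫ R α`, and
suppose `R α = p ≫ α̃` with `α̃` a monomorphism and `p` an epimorphism.  Then (i) `α̃ ≫ p = 𝟙 x`
and `η_x ≫ p = 𝟙 x`; (ii) `(x, p)` is a `T`-algebra, i.e. `μ_x ≫ p = R(L p) ≫ p`;
(iii) `α̃` is a `T`-algebra homomorphism from `(x, p)` to the free `T`-algebra `(R(L x), μ_x)`,
i.e. `p ≫ α̃ = R(L α̃) ≫ μ_x`.  Consequently `(x, p)` is a retract of the free algebra in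
`Alg(T)`, split by the algebra homomorphisms `α̃` and `p`. -/
theorem idempotent_gives_projective_algebra
    {A : Type*} {B : Type*} [Category A] [Category B]
    (L : A ⥤ B) (R : B ⥤ A) (adj : L ⊣ R)
    (x : A) (α : L.obj x ⟶ L.obj x) (p : R.obj (L.obj x) ⟶ x)
    (hα : α ≫ α = α)
    (hmono : Mono (adj.unit.app x ≫ R.map α)) (hepi : Epi p)
    (hfac : R.map α = p ≫ (adj.unit.app x ≫ R.map α)) :
    -- (i)
    ((adj.unit.app x ≫ R.map α) ≫ p = 𝟙 x) ∧
    (adj.unit.app x ≫ p = 𝟙 x) ∧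
    -- (ii) `(x, p)` is a `T`-algebra
    (R.map (adj.counit.app (L.obj x)) ≫ p = R.map (L.map p) ≫ p) ∧
    -- (iii) `α̃` is an algebra homomorphism `(x, p) ⟶ (R(L x), μ_x)`
    (p ≫ (adj.unit.app x ≫ R.map α) =
      R.map (L.map (adj.unit.app x ≫ R.map α)) ≫ R.map (adj.counit.app (L.obj x))) := by
  have hαfac : L.map (adj.unit.app x ≫ R.map α) ≫ adj.counit.app (L.obj x) = α := by
    rw [L.map_comp, Category.assoc, ← Functor.comp_map R L, adj.counit.naturality,
      ← Category.assoc]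
    simp
  have key : L.map p ≫ α = adj.counit.app (L.obj x) ≫ α := by
    conv_lhs => rw [← hαfac, ← Category.assoc, ← L.map_comp, ← hfac]
    rw [← Functor.comp_map R L, adj.counit.naturality, Functor.id_map]
  refine ⟨?_, ?_, ?_, ?_⟩
  · rw [← cancel_mono (adj.unit.app x ≫ R.map α), Category.assoc, ← hfac]
    simp [← R.map_comp, hα]
  · rw [← cancel_mono (adj.unit.app x ≫ R.map α), Category.assoc, ← hfac]
    simp
  · rw [← cancel_mono (adj.unit.app x ≫ R.map α), Category.assoc, Category.assoc, ← hfac,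
      ← R.map_comp, ← R.map_comp]
    congr 1
    exact key.symm
  · rw [← hfac, ← R.map_comp, hαfac]
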